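/- arXiv:2204.07093 — 6 statements merged into one kernel-verified Lean document; each statement's English description precedes it below -/
import Mathlib

section
/- Let T : G → L(E) be a bounded strongly continuous group representation on a Banach space E such that every orbit {T_t v : t ∈ G} is relatively compact. Then the closure J(T) of {T_t : t ∈ G} in the strong operator topology is a compact topological group under composition. -/
open Filter Topology Set

section Aux

variable {G E : Type*} [Group G] [NormedAddCommGroup E]

/-- The set of `C`-Lipschitz maps is pointwise-closed. -/
lemma aux_lip_closed (C : ℝ) :
    IsClosed {f : E → E | ∀ x y : E, dist (f x) (f y) ≤ C * dist x y} := by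
  have h : {f : E → E | ∀ x y : E, dist (f x) (f y) ≤ C * dist x y}
      = ⋂ (x : E), ⋂ (y : E), {f : E → E | dist (f x) (f y) ≤ C * dist x y} := by
    ext f; simp [Set.mem_iInter]
  rw [h]
  exact isClosed_iInter fun x => isClosed_iInter fun y =>
    isClosed_le (Continuous.dist (continuous_apply x) (continuous_apply y)) continuous_const

end Aux

/-- If a bounded strongly continuous group representation has relatively compact orbits,
then the closure of `{T_t : t ∈ G}` in the strong operator topology (realized as the
topology of pointwise convergence on `E → E`) is a compact topological group under
composition. -/
theorem stmt_1 {G E : Type*} [Group G] [TopologicalSpace G] [IsTopologicalGroup G]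
    [NormedAddCommGroup E] [NormedSpace ℂ E] [CompleteSpace E]
    (T : G →* (E →L[ℂ] E))
    (hbdd : ∃ C : ℝ, ∀ t : G, ‖T t‖ ≤ C)
    (hcont : ∀ v : E, Continuous fun t : G => T t v)
    (horb : ∀ v : E, IsCompact (closure (Set.range fun t : G => T t v)))
    (J : Set (E → E)) (hJ : J = closure (Set.range fun t : G => ⇑(T t))) :
    IsCompact J ∧ (id ∈ J) ∧ (∀ f ∈ J, ∀ g ∈ J, f ∘ g ∈ J) ∧
    (∃ inv : (E → E) → (E → E),
      (∀ f ∈ J, inv f ∈ J ∧ f ∘ inv f = id ∧ inv f ∘ f = id) ∧ ContinuousOn inv J) ∧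
    ContinuousOn (fun p : (E → E) × (E → E) => p.1 ∘ p.2) (J ×ˢ J) := by
  obtain ⟨C₀, hC₀⟩ := hbdd
  set C : ℝ := max C₀ 0 with hCdef
  have hC : ∀ t : G, ‖T t‖ ≤ C := fun t => (hC₀ t).trans (le_max_left _ _)
  have hC0 : 0 ≤ C := le_max_right _ _
  -- range is contained in J
  have hrange : ∀ t : G, ⇑(T t) ∈ J := by
    intro t; rw [hJ]; exact subset_closure ⟨t, rfl⟩
  have hJclosed : IsClosed J := by rw [hJ]; exact isClosed_closure
  -- every element of J is C-Lipschitz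
  have hLip : ∀ f ∈ J, ∀ x y : E, dist (f x) (f y) ≤ C * dist x y := by
    have hsub : J ⊆ {f : E → E | ∀ x y : E, dist (f x) (f y) ≤ C * dist x y} := by
      rw [hJ]
      apply closure_minimal _ (aux_lip_closed C)
      rintro _ ⟨t, rfl⟩ x y
      simp only [dist_eq_norm, ← map_sub]
      exact le_trans ((T t).le_opNorm _) (by gcongr; exact hC t)
    exact fun f hf => hsub hf
  -- compactness
  have hcomp : IsCompact J := by
    apply IsCompact.of_isClosed_subset
      (isCompact_univ_pi fun v => horb v) hJclosed
    rw [hJ]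
    apply closure_minimal _ (isClosed_set_pi fun v _ => isClosed_closure)
    rintro _ ⟨t, rfl⟩ v _
    exact subset_closure ⟨t, rfl⟩
  -- identity
  have hid : id ∈ J := by
    have : ⇑(T 1) = (id : E → E) := by rw [map_one]; rfl
    rw [← this]; exact hrange 1
  -- composition stays in J
  have hmulT : ∀ t : G, ∀ g ∈ J, ⇑(T t) ∘ g ∈ J := by
    intro t g hg
    have hcl : IsClosed {g : E → E | ⇑(T t) ∘ g ∈ J} := by
      have : Continuous fun g : E → E => ⇑(T t) ∘ g :=
        continuous_pi fun v => (T t).continuous.comp (continuous_apply v)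
      exact hJclosed.preimage this
    have key : closure (Set.range fun s : G => ⇑(T s)) ⊆ {g : E → E | ⇑(T t) ∘ g ∈ J} := by
      apply closure_minimal _ hcl
      rintro _ ⟨s, rfl⟩
      have : ⇑(T t) ∘ ⇑(T s) = ⇑(T (t * s)) := by
        rw [map_mul]; rfl
      rw [Set.mem_setOf_eq, this]
      exact hrange (t * s)
    exact key (hJ ▸ hg)
  have hmul : ∀ f ∈ J, ∀ g ∈ J, f ∘ g ∈ J := by
    intro f hf g hg
    have hcl : IsClosed {f : E → E | f ∘ g ∈ J} := by
      have : Continuous fun f : E → E => f ∘ g :=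
        continuous_pi fun v => continuous_apply (g v)
      exact hJclosed.preimage this
    have key : closure (Set.range fun t : G => ⇑(T t)) ⊆ {f : E → E | f ∘ g ∈ J} := by
      apply closure_minimal _ hcl
      rintro _ ⟨t, rfl⟩
      exact hmulT t g hg
    exact key (hJ ▸ hf)
  -- joint continuity of composition on J ×ˢ J
  have hcomp_cont : ContinuousOn (fun p : (E → E) × (E → E) => p.1 ∘ p.2) (J ×ˢ J) := by
    intro p hp
    obtain ⟨hp1, hp2⟩ := hp
    apply continuousWithinAt_pi.2
    intro v
    -- target: Tendsto (fun q => q.1 (q.2 v)) (𝓝[J ×ˢ J] p) (𝓝 (p.1 (p.2 v)))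
    rw [ContinuousWithinAt]
    rw [tendsto_iff_dist_tendsto_zero]
    apply squeeze_zero' (Eventually.of_forall fun q => dist_nonneg)
    · show ∀ᶠ q : (E → E) × (E → E) in 𝓝[J ×ˢ J] p,
        dist ((fun p : (E → E) × (E → E) => p.1 ∘ p.2) q v) ((p.1 ∘ p.2) v)
          ≤ C * dist (q.2 v) (p.2 v) + dist (q.1 (p.2 v)) (p.1 (p.2 v))
      filter_upwards [self_mem_nhdsWithin] with q hq
      obtain ⟨hq1, hq2⟩ := hq
      calc dist (q.1 (q.2 v)) (p.1 (p.2 v))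
          ≤ dist (q.1 (q.2 v)) (q.1 (p.2 v)) + dist (q.1 (p.2 v)) (p.1 (p.2 v)) :=
            dist_triangle _ _ _
        _ ≤ C * dist (q.2 v) (p.2 v) + dist (q.1 (p.2 v)) (p.1 (p.2 v)) := by
            gcongr; exact hLip _ hq1 _ _
    · have h1 : Tendsto (fun q : (E → E) × (E → E) => q.2 v) (𝓝[J ×ˢ J] p) (𝓝 (p.2 v)) :=
        ((continuous_apply v).comp continuous_snd).continuousWithinAt
      have h2 : Tendsto (fun q : (E → E) × (E → E) => q.1 (p.2 v)) (𝓝[J ×ˢ J] p)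
          (𝓝 (p.1 (p.2 v))) :=
        ((continuous_apply (p.2 v)).comp continuous_fst).continuousWithinAt
      have := ((tendsto_iff_dist_tendsto_zero.1 h1).const_mul C).add
        (tendsto_iff_dist_tendsto_zero.1 h2)
      simpa using this
  -- existence of inverses
  have hinv_ex : ∀ f ∈ J, ∃ g, g ∈ J ∧ f ∘ g = id ∧ g ∘ f = id := by
    intro f hf
    rw [hJ] at hf
    -- an ultrafilter on G along which T tends to f
    have hne : (comap (fun t : G => ⇑(T t)) (𝓝 f)).NeBot := by
      apply comap_neBot
      intro s hs
      rcases mem_closure_iff_nhds.1 hf s hs with ⟨x, hxs, t, rfl⟩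
      exact ⟨t, hxs⟩
    set U : Ultrafilter G := Ultrafilter.of (comap (fun t : G => ⇑(T t)) (𝓝 f)) with hU
    have hUf : Tendsto (fun t : G => ⇑(T t)) (U : Filter G) (𝓝 f) := by
      calc map (fun t : G => ⇑(T t)) (U : Filter G)
          ≤ map (fun t : G => ⇑(T t)) (comap (fun t : G => ⇑(T t)) (𝓝 f)) :=
            map_mono (Ultrafilter.of_le _)
        _ ≤ 𝓝 f := map_comap_le
    -- limit of inverses along a sub-ultrafilter
    have hmemJ : J ∈ Ultrafilter.map (fun t : G => ⇑(T t⁻¹)) U :=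
      mem_map.2 (Eventually.of_forall fun t => hrange t⁻¹)
    obtain ⟨g, hgJ, hgle⟩ := hcomp.ultrafilter_le_nhds
      (Ultrafilter.map (fun t : G => ⇑(T t⁻¹)) U) (le_principal_iff.2 hmemJ)
    have hUg : Tendsto (fun t : G => ⇑(T t⁻¹)) (U : Filter G) (𝓝 g) := hgle
    refine ⟨g, hgJ, ?_, ?_⟩
    · -- f ∘ g = id
      funext v
      have hgv : Tendsto (fun t : G => T t⁻¹ v) (U : Filter G) (𝓝 (g v)) :=
        ((continuous_apply v).tendsto g).comp hUg
      have key : Tendsto (fun t : G => T t (T t⁻¹ v)) (U : Filter G) (𝓝 (f (g v))) := by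
        rw [tendsto_iff_dist_tendsto_zero]
        apply squeeze_zero' (Eventually.of_forall fun t => dist_nonneg)
        · apply Eventually.of_forall
          intro t
          calc dist (T t (T t⁻¹ v)) (f (g v))
              ≤ dist (T t (T t⁻¹ v)) (T t (g v)) + dist (T t (g v)) (f (g v)) :=
                dist_triangle _ _ _
            _ ≤ C * dist (T t⁻¹ v) (g v) + dist (T t (g v)) (f (g v)) := by
                gcongr; exact hLip _ (hrange t) _ _
        · have h2 : Tendsto (fun t : G => T t (g v)) (U : Filter G) (𝓝 (f (g v))) :=
            ((continuous_apply (g v)).tendsto f).comp hUf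
          have := ((tendsto_iff_dist_tendsto_zero.1 hgv).const_mul C).add
            (tendsto_iff_dist_tendsto_zero.1 h2)
          simpa using this
      have hconst : (fun t : G => T t (T t⁻¹ v)) = fun _ : G => v := by
        funext t
        have : T t (T t⁻¹ v) = (T t * T t⁻¹) v := rfl
        rw [this, ← map_mul, mul_inv_cancel, map_one]; rfl
      rw [hconst] at key
      simp only [Function.comp_apply, id_eq]
      exact (tendsto_nhds_unique tendsto_const_nhds key).symm
    · -- g ∘ f = id
      funext v
      have hfv : Tendsto (fun t : G => T t v) (U : Filter G) (𝓝 (f v)) :=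
        ((continuous_apply v).tendsto f).comp hUf
      have key : Tendsto (fun t : G => T t⁻¹ (T t v)) (U : Filter G) (𝓝 (g (f v))) := by
        rw [tendsto_iff_dist_tendsto_zero]
        apply squeeze_zero' (Eventually.of_forall fun t => dist_nonneg)
        · apply Eventually.of_forall
          intro t
          calc dist (T t⁻¹ (T t v)) (g (f v))
              ≤ dist (T t⁻¹ (T t v)) (T t⁻¹ (f v)) + dist (T t⁻¹ (f v)) (g (f v)) :=
                dist_triangle _ _ _
            _ ≤ C * dist (T t v) (f v) + dist (T t⁻¹ (f v)) (g (f v)) := by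
                gcongr; exact hLip _ (hrange t⁻¹) _ _
        · have h2 : Tendsto (fun t : G => T t⁻¹ (f v)) (U : Filter G) (𝓝 (g (f v))) :=
            ((continuous_apply (f v)).tendsto g).comp hUg
          have := ((tendsto_iff_dist_tendsto_zero.1 hfv).const_mul C).add
            (tendsto_iff_dist_tendsto_zero.1 h2)
          simpa using this
      have hconst : (fun t : G => T t⁻¹ (T t v)) = fun _ : G => v := by
        funext t
        have : T t⁻¹ (T t v) = (T t⁻¹ * T t) v := rfl
        rw [this, ← map_mul, inv_mul_cancel, map_one]; rfl
      rw [hconst] at key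
      simp only [Function.comp_apply, id_eq]
      exact (tendsto_nhds_unique tendsto_const_nhds key).symm
  -- define inv via choice
  classical
  set inv : (E → E) → (E → E) := fun f =>
    if h : ∃ g, g ∈ J ∧ f ∘ g = id ∧ g ∘ f = id then h.choose else id with hinvdef
  have hinv_spec : ∀ f ∈ J, inv f ∈ J ∧ f ∘ inv f = id ∧ inv f ∘ f = id := by
    intro f hf
    have h := hinv_ex f hf
    simp only [hinvdef, dif_pos h]
    exact h.choose_spec
  -- uniqueness of two-sided inverse
  have huniq : ∀ f g₁ g₂ : E → E, f ∘ g₁ = id → g₂ ∘ f = id → g₁ = g₂ := by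
    intro f g₁ g₂ h1 h2
    calc g₁ = id ∘ g₁ := rfl
      _ = (g₂ ∘ f) ∘ g₁ := by rw [h2]
      _ = g₂ ∘ (f ∘ g₁) := rfl
      _ = g₂ := by rw [h1]; rfl
  -- continuity of inv on J
  have hinv_cont : ContinuousOn inv J := by
    intro f0 hf0
    rw [ContinuousWithinAt, tendsto_iff_ultrafilter]
    intro u hu
    have huJ : J ∈ u := hu self_mem_nhdsWithin
    have hinvJ : ∀ᶠ h in (u : Filter (E → E)), inv h ∈ J := by
      filter_upwards [huJ] with h hh
      exact (hinv_spec h hh).1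
    obtain ⟨g, hgJ, hgle⟩ := hcomp.ultrafilter_le_nhds (u.map inv)
      (le_principal_iff.2 (mem_map.2 hinvJ))
    have hgleT : Tendsto inv (u : Filter (E → E)) (𝓝 g) := hgle
    have hu0 : Tendsto (fun h : E → E => h) (u : Filter (E → E)) (𝓝 f0) :=
      hu.trans nhdsWithin_le_nhds
    have hpair1 : Tendsto (fun h : E → E => (h, inv h)) (u : Filter (E → E))
        (𝓝[J ×ˢ J] (f0, g)) := by
      rw [nhdsWithin, tendsto_inf]
      refine ⟨?_, ?_⟩
      · rw [nhds_prod_eq]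
        exact hu0.prodMk hgleT
      · rw [tendsto_principal]
        filter_upwards [huJ, hinvJ] with h h1 h2
        exact ⟨h1, h2⟩
    have hpair2 : Tendsto (fun h : E → E => (inv h, h)) (u : Filter (E → E))
        (𝓝[J ×ˢ J] (g, f0)) := by
      rw [nhdsWithin, tendsto_inf]
      refine ⟨?_, ?_⟩
      · rw [nhds_prod_eq]
        exact hgleT.prodMk hu0
      · rw [tendsto_principal]
        filter_upwards [huJ, hinvJ] with h h1 h2
        exact ⟨h2, h1⟩
    have hT1 : Tendsto (fun h : E → E => h ∘ inv h) (u : Filter (E → E)) (𝓝 (f0 ∘ g)) :=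
      Tendsto.comp (hcomp_cont (f0, g) ⟨hf0, hgJ⟩) hpair1
    have hT2 : Tendsto (fun h : E → E => inv h ∘ h) (u : Filter (E → E)) (𝓝 (g ∘ f0)) :=
      Tendsto.comp (hcomp_cont (g, f0) ⟨hgJ, hf0⟩) hpair2
    have heq1 : (fun h : E → E => h ∘ inv h) =ᶠ[(u : Filter (E → E))] fun _ => id := by
      filter_upwards [huJ] with h hh
      exact (hinv_spec h hh).2.1
    have heq2 : (fun h : E → E => inv h ∘ h) =ᶠ[(u : Filter (E → E))] fun _ => id := by
      filter_upwards [huJ] with h hh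
      exact (hinv_spec h hh).2.2
    have h1 : f0 ∘ g = id := tendsto_nhds_unique (hT1.congr' heq1) tendsto_const_nhds
    have h2 : g ∘ f0 = id := tendsto_nhds_unique (hT2.congr' heq2) tendsto_const_nhds
    have hgeq : g = inv f0 := huniq f0 g (inv f0) h1 (hinv_spec f0 hf0).2.2
    rw [← hgeq]
    exact hgleT
  exact ⟨hcomp, hid, hmul, ⟨inv, hinv_spec, hinv_cont⟩, hcomp_cont⟩
end

section
/- Let (K,φ) be a minimal topological dynamical system whose uniform enveloping semigroup H = E_u(K,φ) is a compact topological group with Haar probability measure m. Then the measure μ on K defined by μ(f) = ∫_H f(ϑ(x)) dm(ϑ) for f ∈ C(K) is an invariant probability measure which does not depend on the choice of x ∈ K, and it is the unique G-invariant regular Borel probability measure on K. -/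
open MeasureTheory

/-- For a minimal system whose uniform enveloping semigroup is a compact group `H` with Haar
probability measure `m`, the functional `f ↦ ∫_H f(ϑ•x) dm(ϑ)` is independent of `x`,
is given by a `G`-invariant regular Borel probability measure, and every `G`-invariant
regular Borel probability measure coincides with it. -/
theorem stmt_5 {G H K : Type*} [Group G] [TopologicalSpace G] [IsTopologicalGroup G]
    [Group H] [TopologicalSpace H] [IsTopologicalGroup H] [CompactSpace H] [T2Space H]
    [MeasurableSpace H] [BorelSpace H]
    [TopologicalSpace K] [CompactSpace K] [T2Space K] [Nonempty K]
    [MeasurableSpace K] [BorelSpace K]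
    [MulAction H K] [ContinuousSMul H K]
    (ι : G →* H) (hι : Continuous ι) (hdense : DenseRange ι)
    (hmin : ∀ x : K, Dense (Set.range fun t : G => ι t • x))
    (m : Measure H) [m.IsHaarMeasure] [IsProbabilityMeasure m] :
    (∀ x y : K, ∀ f : C(K, ℂ), ∫ ϑ, f (ϑ • x) ∂m = ∫ ϑ, f (ϑ • y) ∂m) ∧
    (∀ x : K, ∀ t : G, ∀ f : C(K, ℂ), ∫ ϑ, f (ι t • ϑ • x) ∂m = ∫ ϑ, f (ϑ • x) ∂m) ∧
    (∀ x : K, ∃ μ : Measure K, IsProbabilityMeasure μ ∧ μ.Regular ∧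
      (∀ t : G, Measure.map (fun z : K => ι t • z) μ = μ) ∧
      ∀ f : C(K, ℂ), ∫ z, f z ∂μ = ∫ ϑ, f (ϑ • x) ∂m) ∧
    (∀ ν : Measure K, IsProbabilityMeasure ν → ν.Regular →
      (∀ t : G, Measure.map (fun z : K => ι t • z) ν = ν) →
      ∀ x : K, ∀ f : C(K, ℂ), ∫ z, f z ∂ν = ∫ ϑ, f (ϑ • x) ∂m) := by
  -- basic continuity facts
  have hsmul_cont : ∀ x : K, Continuous fun ϑ : H => ϑ • x := fun x =>
    continuous_id.smul continuous_const
  -- Haar measure on a compact group is right invariant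
  haveI hRI : m.IsMulRightInvariant := by
    constructor
    intro g
    haveI : IsProbabilityMeasure (m.map (· * g)) :=
      Measure.isProbabilityMeasure_map (measurable_mul_const g).aemeasurable
    have h := Measure.isMulInvariant_eq_smul_of_compactSpace (m.map (· * g)) m
    have hu := congrArg (fun μ : Measure H => μ Set.univ) h
    simp only [measure_univ, Measure.smul_apply, smul_eq_mul, mul_one, ENNReal.smul_def] at hu
    rw [h, ENNReal.smul_def, ← hu, one_smul]
  -- the action of H on K is transitive
  have htrans : ∀ x y : K, ∃ η : H, η • x = y := by
    intro x y
    have hc : IsCompact ((fun ϑ : H => ϑ • x) '' Set.univ) :=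
      isCompact_univ.image (hsmul_cont x)
    have hsub : (Set.range fun t : G => ι t • x) ⊆ (fun ϑ : H => ϑ • x) '' Set.univ := by
      rintro _ ⟨t, rfl⟩; exact ⟨ι t, trivial, rfl⟩
    have hd : Dense ((fun ϑ : H => ϑ • x) '' Set.univ) := (hmin x).mono hsub
    have : (fun ϑ : H => ϑ • x) '' Set.univ = Set.univ := by
      rw [← hc.isClosed.closure_eq, hd.closure_eq]
    obtain ⟨η, -, hη⟩ := this ▸ (Set.mem_univ y)
    exact ⟨η, hη⟩
  -- part 1 : independence of the base point
  have part1 : ∀ x y : K, ∀ f : C(K, ℂ), ∫ ϑ, f (ϑ • x) ∂m = ∫ ϑ, f (ϑ • y) ∂m := by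
    intro x y f
    obtain ⟨η, rfl⟩ := htrans x y
    have h1 : ∀ ϑ : H, f (ϑ • η • x) = f ((ϑ * η) • x) := fun ϑ => by rw [mul_smul]
    calc ∫ ϑ, f (ϑ • x) ∂m = ∫ ϑ, f ((ϑ * η) • x) ∂m :=
          (integral_mul_right_eq_self (fun ϑ : H => f (ϑ • x)) η).symm
      _ = ∫ ϑ, f (ϑ • η • x) ∂m := by simp_rw [h1]
  -- part 2 : invariance of the functional
  have part2 : ∀ x : K, ∀ t : G, ∀ f : C(K, ℂ),
      ∫ ϑ, f (ι t • ϑ • x) ∂m = ∫ ϑ, f (ϑ • x) ∂m := by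
    intro x t f
    have h1 : ∀ ϑ : H, f (ι t • ϑ • x) = f ((ι t * ϑ) • x) := fun ϑ => by rw [mul_smul]
    calc ∫ ϑ, f (ι t • ϑ • x) ∂m = ∫ ϑ, f ((ι t * ϑ) • x) ∂m := by simp_rw [h1]
      _ = ∫ ϑ, f (ϑ • x) ∂m := integral_mul_left_eq_self (fun ϑ : H => f (ϑ • x)) (ι t)
  refine ⟨part1, part2, ?_, ?_⟩
  · -- part 3 : existence of the invariant regular measure
    intro x
    refine ⟨m.map (fun ϑ : H => ϑ • x), ?_, ?_, ?_, ?_⟩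
    · exact Measure.isProbabilityMeasure_map (hsmul_cont x).measurable.aemeasurable
    · haveI : (m.map (fun ϑ : H => ϑ • x)).InnerRegular :=
        Measure.InnerRegular.map_of_continuous (hsmul_cont x)
      haveI : IsProbabilityMeasure (m.map (fun ϑ : H => ϑ • x)) :=
        Measure.isProbabilityMeasure_map (hsmul_cont x).measurable.aemeasurable
      infer_instance
    · intro t
      rw [Measure.map_map (continuous_const_smul (ι t)).measurable (hsmul_cont x).measurable]
      have h1 : ((fun z : K => ι t • z) ∘ fun ϑ : H => ϑ • x)
          = (fun ϑ : H => ϑ • x) ∘ (fun ϑ : H => ι t * ϑ) := by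
        funext ϑ; simp [Function.comp, mul_smul]
      rw [h1, ← Measure.map_map (hsmul_cont x).measurable (measurable_const_mul (ι t)),
        map_mul_left_eq_self m (ι t)]
    · intro f
      rw [integral_map (hsmul_cont x).measurable.aemeasurable
        f.continuous.aestronglyMeasurable]
  · -- part 4 : uniqueness
    intro ν hνprob hνreg hνinv x f
    -- the function ϑ ↦ ∫ f(ϑ•z) dν is continuous
    have hFc : Continuous fun p : H × K => f (p.1 • p.2) :=
      f.continuous.comp continuous_smul
    set Φ : H → ℂ := fun ϑ => ∫ z, f (ϑ • z) ∂ν with hΦdef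
    have hΦcont : Continuous Φ := by
      have hL : LipschitzWith 1 (fun g : C(K, ℂ) => ∫ z, g z ∂ν) := by
        apply LipschitzWith.of_dist_le_mul
        intro g₁ g₂
        have hi1 : Integrable (fun z => g₁ z) ν :=
          g₁.continuous.integrable_of_hasCompactSupport
            (HasCompactSupport.of_compactSpace _)
        have hi2 : Integrable (fun z => g₂ z) ν :=
          g₂.continuous.integrable_of_hasCompactSupport
            (HasCompactSupport.of_compactSpace _)
        rw [dist_eq_norm, ← integral_sub hi1 hi2]
        have hb : ∀ z : K, ‖g₁ z - g₂ z‖ ≤ dist g₁ g₂ := fun z => by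
          rw [← dist_eq_norm]; exact ContinuousMap.dist_apply_le_dist z
        calc ‖∫ z, (g₁ z - g₂ z) ∂ν‖ ≤ dist g₁ g₂ * (ν Set.univ).toReal :=
              norm_integral_le_of_norm_le_const (Filter.Eventually.of_forall hb)
          _ = 1 * dist g₁ g₂ := by simp [measure_univ]
      have hcurry : Continuous fun ϑ : H => (⟨fun p => f (p.1 • p.2), hFc⟩ : C(H × K, ℂ)).curry ϑ :=
        (ContinuousMap.curry _).continuous
      exact hL.continuous.comp hcurry
    -- Φ is constant, equal to ∫ f dν, on the dense range of ι
    have hΦeq : Φ = fun _ : H => ∫ z, f z ∂ν := by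
      apply hdense.equalizer hΦcont continuous_const
      funext t
      show (∫ z, f (ι t • z) ∂ν) = ∫ z, f z ∂ν
      conv_rhs => rw [← hνinv t]
      rw [integral_map (continuous_const_smul (ι t)).measurable.aemeasurable
        f.continuous.aestronglyMeasurable]
    -- Fubini swap
    have hswap := integral_integral_swap_of_hasCompactSupport
      (f := fun (ϑ : H) (z : K) => f (ϑ • z)) hFc
      (HasCompactSupport.of_compactSpace _) (μ := m) (ν := ν)
    have hlhs : (∫ ϑ, (∫ z, f (ϑ • z) ∂ν) ∂m) = ∫ z, f z ∂ν := by
      have : (fun ϑ : H => ∫ z, f (ϑ • z) ∂ν) = fun _ : H => ∫ z, f z ∂ν := hΦeq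
      rw [this, integral_const]
      simp [measure_univ]
    have hrhs : (∫ z, (∫ ϑ, f (ϑ • z) ∂m) ∂ν) = ∫ ϑ, f (ϑ • x) ∂m := by
      have : (fun z : K => ∫ ϑ, f (ϑ • z) ∂m) = fun _ : K => ∫ ϑ, f (ϑ • x) ∂m := by
        funext z; exact (part1 x z f).symm
      rw [this, integral_const]
      simp [measure_univ]
    rw [← hlhs, hswap, hrhs]
end

section
/- Let (K,φ) be a topological dynamical system with discrete spectrum. Then (K,φ) is topologically ergodic (i.e., the fixed space of the Koopman representation on C(K) is one-dimensional) if and only if (K,φ) is minimal. -/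
open Set

/-- Equicontinuity of bounded subsets of a finite-dimensional subspace of `C(K, ℂ)`. -/
lemma aux_equicont {K : Type*} [TopologicalSpace K] [CompactSpace K]
    (S : Submodule ℂ C(K, ℂ)) (hfd : FiniteDimensional ℂ S)
    (R : ℝ) (hR : 0 ≤ R) (y₀ : K) {ε : ℝ} (hε : 0 < ε) :
    ∃ U ∈ nhds y₀, ∀ v : S, ‖v‖ ≤ R → ∀ y ∈ U,
      ‖(v : C(K, ℂ)) y - (v : C(K, ℂ)) y₀‖ ≤ ε := by
  classical
  let b : Module.Basis (Fin (Module.finrank ℂ S)) ℂ S := Module.finBasis ℂ S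
  let ℓ : Fin (Module.finrank ℂ S) → S →L[ℂ] ℂ :=
    fun i => LinearMap.toContinuousLinearMap (b.coord i)
  set C : ℝ := ∑ i, ‖ℓ i‖ with hCdef
  have hC : 0 ≤ C := Finset.sum_nonneg fun i _ => (ℓ i).opNorm_nonneg
  have hpos : 0 < C * R + 1 := by nlinarith
  set δ : ℝ := ε / (C * R + 1) with hδdef
  have hδ : 0 < δ := div_pos hε hpos
  refine ⟨⋂ i, {y | ‖(b i : C(K, ℂ)) y - (b i : C(K, ℂ)) y₀‖ < δ}, ?_, ?_⟩
  · rw [Filter.iInter_mem]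
    intro i
    have hcont : Continuous fun y => ‖(b i : C(K, ℂ)) y - (b i : C(K, ℂ)) y₀‖ :=
      (((b i : C(K, ℂ)).continuous).sub continuous_const).norm
    refine (isOpen_lt hcont continuous_const).mem_nhds ?_
    simp [hδ]
  · intro v hv y hy
    simp only [Set.mem_iInter, Set.mem_setOf_eq] at hy
    have hrepr : (v : C(K, ℂ)) = ∑ i, b.repr v i • ((b i : S) : C(K, ℂ)) := by
      conv_lhs => rw [← b.sum_repr v]
      push_cast
      rfl
    have hev : ∀ w : K, (v : C(K, ℂ)) w = ∑ i, b.repr v i • ((b i : S) : C(K, ℂ)) w := by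
      intro w
      rw [hrepr]
      simp
    have key : (v : C(K, ℂ)) y - (v : C(K, ℂ)) y₀
        = ∑ i, b.repr v i • (((b i : S) : C(K, ℂ)) y - ((b i : S) : C(K, ℂ)) y₀) := by
      rw [hev y, hev y₀, ← Finset.sum_sub_distrib]
      congr 1
      ext i
      rw [smul_sub]
    calc ‖(v : C(K, ℂ)) y - (v : C(K, ℂ)) y₀‖
        = ‖∑ i, b.repr v i • (((b i : S) : C(K, ℂ)) y - ((b i : S) : C(K, ℂ)) y₀)‖ := by
          rw [key]
      _ ≤ ∑ i, ‖b.repr v i • (((b i : S) : C(K, ℂ)) y - ((b i : S) : C(K, ℂ)) y₀)‖ :=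
          norm_sum_le _ _
      _ ≤ ∑ i, ‖ℓ i‖ * R * δ := by
          refine Finset.sum_le_sum fun i _ => ?_
          rw [norm_smul]
          have h1 : ‖b.repr v i‖ ≤ ‖ℓ i‖ * R := by
            have : b.repr v i = ℓ i v := by
              simp [ℓ, LinearMap.coe_toContinuousLinearMap', Module.Basis.coord_apply]
            rw [this]
            calc ‖ℓ i v‖ ≤ ‖ℓ i‖ * ‖v‖ := (ℓ i).le_opNorm v
              _ ≤ ‖ℓ i‖ * R := by nlinarith [(ℓ i).opNorm_nonneg]
          have h2 : ‖((b i : S) : C(K, ℂ)) y - ((b i : S) : C(K, ℂ)) y₀‖ ≤ δ :=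
            le_of_lt (hy i)
          have h3 : (0:ℝ) ≤ ‖b.repr v i‖ := norm_nonneg _
          nlinarith [norm_nonneg (((b i : S) : C(K, ℂ)) y - ((b i : S) : C(K, ℂ)) y₀),
            (ℓ i).opNorm_nonneg]
      _ = C * R * δ := by rw [← Finset.sum_mul, ← Finset.sum_mul]
      _ = C * R * ε / (C * R + 1) := by rw [hδdef]; ring
      _ ≤ ε := by rw [div_le_iff₀ hpos]; nlinarith

/-- For a topological dynamical system with discrete spectrum, topological ergodicity
(the Koopman fixed space consists exactly of the constants) is equivalent to minimality
(the only closed invariant subsets are `∅` and `K`). -/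
theorem stmt_6 {G K : Type*} [Group G] [TopologicalSpace G] [IsTopologicalGroup G]
    [TopologicalSpace K] [CompactSpace K] [T2Space K] [Nonempty K]
    (φ : G → C(K, K))
    (h1 : φ 1 = ContinuousMap.id K)
    (hmul : ∀ s t : G, φ (s * t) = (φ s).comp (φ t))
    (hjoint : Continuous fun p : G × K => φ p.1 p.2)
    (hds : Dense (⋃ S ∈ {S : Submodule ℂ C(K, ℂ) |
        FiniteDimensional ℂ S ∧ ∀ t : G, ∀ f ∈ S, f.comp (φ t) ∈ S}, (S : Set C(K, ℂ)))) :
    (∀ f : C(K, ℂ), (∀ t : G, f.comp (φ t) = f) → ∃ c : ℂ, f = ContinuousMap.const K c) ↔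
    (∀ M : Set K, IsClosed M → (∀ t : G, ∀ y ∈ M, φ t y ∈ M) → M = ∅ ∨ M = Set.univ) := by
  have hGne : Nonempty G := ⟨1⟩
  constructor
  · -- ergodic → minimal
    intro herg M hMcl hMinv
    by_contra hcon
    push_neg at hcon
    obtain ⟨hne, hproper⟩ := hcon
    obtain ⟨x₀, hx₀⟩ := hne
    obtain ⟨z, hz⟩ : ∃ z, z ∉ M := by
      by_contra h
      push_neg at h
      exact hproper (Set.eq_univ_of_forall h)
    -- Urysohn function
    obtain ⟨f, hf0, hf1, hf01⟩ := exists_continuous_zero_one_of_isClosed hMcl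
      (isClosed_singleton (x := z)) (Set.disjoint_singleton_right.mpr hz)
    set fC : C(K, ℂ) := ⟨fun y => (f y : ℂ), Complex.continuous_ofReal.comp f.continuous⟩
      with hfCdef
    -- approximate by g in a finite-dimensional invariant subspace
    obtain ⟨g, hgmem, hgdist⟩ := Metric.mem_closure_iff.mp (hds fC) (1/4) (by norm_num)
    rw [Set.mem_iUnion₂] at hgmem
    obtain ⟨S, ⟨hSfd, hSinv⟩, hgS⟩ := hgmem
    -- pointwise bounds for g
    have hgM : ∀ m ∈ M, ‖g m‖ ≤ 1/4 := by
      intro m hm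
      have : fC m = 0 := by
        simp only [hfCdef, ContinuousMap.coe_mk]
        rw [hf0 hm]
        simp
      calc ‖g m‖ = ‖g m - fC m‖ := by rw [this, sub_zero]
        _ = dist (fC m) (g m) := by rw [dist_eq_norm, norm_sub_rev]
        _ ≤ dist fC g := ContinuousMap.dist_apply_le_dist m
        _ ≤ 1/4 := le_of_lt hgdist
    have hgz : 3/4 ≤ ‖g z‖ := by
      have h1z : fC z = 1 := by
        simp only [hfCdef, ContinuousMap.coe_mk]
        rw [hf1 rfl]
        simp
      have := ContinuousMap.dist_apply_le_dist (f := fC) (g := g) z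
      have hd : dist (fC z) (g z) ≤ 1/4 := this.trans (le_of_lt hgdist)
      have : ‖(1:ℂ)‖ - ‖g z‖ ≤ ‖(1:ℂ) - g z‖ := norm_sub_norm_le _ _
      rw [norm_one] at this
      rw [h1z, dist_eq_norm] at hd
      linarith
    -- the invariant sup function
    set F : K → ℝ := fun y => ⨆ t : G, ‖g (φ t y)‖ with hFdef
    have hbdd : ∀ y : K, BddAbove (Set.range fun t : G => ‖g (φ t y)‖) := by
      intro y
      refine ⟨‖g‖, ?_⟩
      rintro _ ⟨t, rfl⟩
      exact g.norm_coe_le_norm _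
    -- continuity of F
    have hFcont : Continuous F := by
      rw [continuous_iff_continuousAt]
      intro y₀
      rw [ContinuousAt, Metric.tendsto_nhds]
      intro ε hε
      obtain ⟨U, hU, hUprop⟩ := aux_equicont S hSfd ‖g‖ (norm_nonneg g) y₀ (half_pos hε)
      filter_upwards [hU] with y hy
      have key : ∀ t : G, ‖g (φ t y) - g (φ t y₀)‖ ≤ ε/2 := by
        intro t
        have hvS : g.comp (φ t) ∈ S := hSinv t g hgS
        have hnorm : ‖(⟨g.comp (φ t), hvS⟩ : S)‖ ≤ ‖g‖ := by
          rw [Submodule.coe_norm]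
          refine (ContinuousMap.norm_le _ (norm_nonneg g)).mpr ?_
          intro y'
          exact g.norm_coe_le_norm _
        exact hUprop ⟨g.comp (φ t), hvS⟩ hnorm y hy
      have hle1 : F y ≤ F y₀ + ε/2 := by
        refine ciSup_le fun t => ?_
        have : ‖g (φ t y)‖ ≤ ‖g (φ t y₀)‖ + ε/2 := by
          have := norm_sub_norm_le (g (φ t y)) (g (φ t y₀))
          have h2 := key t
          linarith
        exact this.trans (add_le_add_left (le_ciSup (hbdd y₀) t) _)
      have hle2 : F y₀ ≤ F y + ε/2 := by
        refine ciSup_le fun t => ?_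
        have : ‖g (φ t y₀)‖ ≤ ‖g (φ t y)‖ + ε/2 := by
          have := norm_sub_norm_le (g (φ t y₀)) (g (φ t y))
          have h2 := key t
          rw [norm_sub_rev] at this
          linarith
        exact this.trans (add_le_add_left (le_ciSup (hbdd y) t) _)
      rw [Real.dist_eq, abs_sub_lt_iff]
      constructor <;> linarith [hε]
    -- invariance of F
    have hFinv : ∀ (s : G) (y : K), F (φ s y) = F y := by
      intro s y
      have hcomp : ∀ t : G, φ t (φ s y) = φ (t * s) y := by
        intro t
        rw [hmul t s]
        rfl
      have hfun : (fun t : G => ‖g (φ t (φ s y))‖)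
          = (fun t : G => ‖g (φ t y)‖) ∘ (fun t : G => t * s) := by
        funext t
        simp [hcomp t]
      have hsurj : Function.Surjective (fun t : G => t * s) :=
        fun x => ⟨x * s⁻¹, by group⟩
      simp only [hFdef]
      rw [iSup, iSup, hfun, Function.Surjective.range_comp hsurj]
    -- assemble the invariant continuous map
    set Fc : C(K, ℂ) := ⟨fun y => (F y : ℂ), Complex.continuous_ofReal.comp hFcont⟩
      with hFc
    have hFcinv : ∀ t : G, Fc.comp (φ t) = Fc := by
      intro t
      ext y
      simp only [ContinuousMap.comp_apply, hFc, ContinuousMap.coe_mk]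
      exact_mod_cast congrArg Complex.ofReal (hFinv t y)
    obtain ⟨c, hc⟩ := herg Fc hFcinv
    have heq : F x₀ = F z := by
      have hx : (F x₀ : ℂ) = c := by
        have := congrArg (fun h : C(K,ℂ) => h x₀) hc
        simpa [hFc] using this
      have hzz : (F z : ℂ) = c := by
        have := congrArg (fun h : C(K,ℂ) => h z) hc
        simpa [hFc] using this
      exact_mod_cast hx.trans hzz.symm
    have hFx₀ : F x₀ ≤ 1/4 := ciSup_le fun t => hgM _ (hMinv t x₀ hx₀)
    have hFz : 3/4 ≤ F z := by
      have h0 : φ (1:G) z = z := by rw [h1]; rfl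
      calc (3:ℝ)/4 ≤ ‖g z‖ := hgz
        _ = ‖g (φ (1:G) z)‖ := by rw [h0]
        _ ≤ F z := le_ciSup (hbdd z) (1:G)
    linarith
  · -- minimal → ergodic
    intro hmin f hf
    obtain ⟨x₀⟩ := (inferInstance : Nonempty K)
    refine ⟨f x₀, ?_⟩
    have hM : f ⁻¹' {f x₀} = Set.univ := by
      have hinv : ∀ t : G, ∀ y ∈ f ⁻¹' {f x₀}, φ t y ∈ f ⁻¹' {f x₀} := by
        intro t y hy
        have : f (φ t y) = f y := by
          have := congrArg (fun h : C(K,ℂ) => h y) (hf t)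
          simpa using this
        simp only [Set.mem_preimage, Set.mem_singleton_iff] at hy ⊢
        rw [this, hy]
      rcases hmin (f ⁻¹' {f x₀}) (isClosed_singleton.preimage f.continuous) hinv with h | h
      · exact absurd h (Set.nonempty_iff_ne_empty.mp ⟨x₀, rfl⟩)
      · exact h
    ext y
    have : y ∈ f ⁻¹' {f x₀} := hM ▸ Set.mem_univ y
    simpa using this
end

section
/- Let G be an abelian topological group and σ ⊆ G* a subgroup of its character group. Then σ coincides with the set of characters of G obtained by pulling back characters of the compactification σ* along the evaluation map, i.e., σ = {α ∘ c_σ : α ∈ (σ*)*}. -/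
open Topology MeasureTheory ComplexConjugate

namespace Stmt12Aux

section Compactness

variable (X Y : Type*) [TopologicalSpace X] [TopologicalSpace Y] [DiscreteTopology X]

/-- For discrete `X`, the compact-open topology on `C(X, Y)` agrees with the product topology. -/
noncomputable def homeoFn : C(X, Y) ≃ₜ (X → Y) where
  toEquiv := ContinuousMap.equivFnOfDiscrete (α := X) (β := Y)
  continuous_toFun := continuous_coeFun
  continuous_invFun := by
    rw [ContinuousMap.continuous_compactOpen]
    intro K hK U hU
    have hKf : K.Finite := hK.finite (isDiscrete_iff_discreteTopology.mpr inferInstance)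
    have hs : {x : X → Y | Set.MapsTo (⇑((ContinuousMap.equivFnOfDiscrete (α := X) (β := Y)).invFun x)) K U}
        = ⋂ k ∈ K, (fun g : X → Y => g k) ⁻¹' U := by
      ext g
      simp [Set.MapsTo, ContinuousMap.equivFnOfDiscrete]
    rw [hs]
    exact hKf.isOpen_biInter fun k _ => hU.preimage (continuous_apply k)

instance [CompactSpace Y] : CompactSpace C(X, Y) := (homeoFn X Y).symm.compactSpace

instance {A : Type*} [Monoid A] [TopologicalSpace A] [DiscreteTopology A] :
    CompactSpace (PontryaginDual A) :=
  (ContinuousMonoidHom.isClosedEmbedding_toContinuousMap A Circle).compactSpace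

instance {A : Type*} [Monoid A] [TopologicalSpace A] :
    ContinuousEvalConst (PontryaginDual A) A Circle :=
  ContinuousMonoidHom.instContinuousEvalConst A Circle

end Compactness

section IntegralChar

variable {K : Type*} [CommGroup K] [TopologicalSpace K] [IsTopologicalGroup K]
  [MeasurableSpace K] [BorelSpace K] {μ : Measure K} [μ.IsMulLeftInvariant]

lemma integral_char_eq_zero (χ : PontryaginDual K) (hχ : χ ≠ 1) :
    ∫ x, (χ x : ℂ) ∂μ = 0 := by
  obtain ⟨g, hg⟩ : ∃ g, χ g ≠ 1 := by
    by_contra h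
    push_neg at h
    exact hχ (ContinuousMonoidHom.ext fun x => h x)
  have h1 : ∫ x, (χ (g * x) : ℂ) ∂μ = ∫ x, (χ x : ℂ) ∂μ :=
    integral_mul_left_eq_self (fun x => (χ x : ℂ)) g
  have h2 : ∀ x : K, (χ (g * x) : ℂ) = (χ g : ℂ) * (χ x : ℂ) := fun x => by
    rw [map_mul, Circle.coe_mul]
  simp_rw [h2, integral_const_mul] at h1
  have h3 : ((χ g : ℂ) - 1) * ∫ x, (χ x : ℂ) ∂μ = 0 := by
    rw [sub_mul, one_mul, h1, sub_self]
  rcases mul_eq_zero.mp h3 with h | h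
  · exact absurd (Circle.coe_injective (by rw [Circle.coe_one]; exact sub_eq_zero.mp h)) hg
  · exact h

end IntegralChar

section Surj

variable {A : Type*} [CommGroup A] [TopologicalSpace A] [DiscreteTopology A] [IsTopologicalGroup A]

/-- Evaluation at `a : A` as a character of `PontryaginDual A`. -/
noncomputable def ev (a : A) : PontryaginDual (PontryaginDual A) :=
  { toFun := fun φ => φ a
    map_one' := rfl
    map_mul' := fun _ _ => rfl
    continuous_toFun := continuous_eval_const a }

omit [DiscreteTopology A] [IsTopologicalGroup A] in
@[simp] lemma ev_apply (a : A) (φ : PontryaginDual A) : ev a φ = φ a := rfl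

/-- Evaluation `A →* C(PontryaginDual A, ℂ)`. -/
noncomputable def evC : A →* C(PontryaginDual A, ℂ) where
  toFun a := ⟨fun φ => (φ a : ℂ), continuous_subtype_val.comp (continuous_eval_const a)⟩
  map_one' := by ext φ; simp
  map_mul' a b := by ext φ; simp [map_mul]

omit [DiscreteTopology A] [IsTopologicalGroup A] in
@[simp] lemma evC_apply (a : A) (φ : PontryaginDual A) : evC a φ = (φ a : ℂ) := rfl

theorem exists_eval (α : PontryaginDual (PontryaginDual A)) :
    ∃ a : A, ∀ φ : PontryaginDual A, α φ = φ a := by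
  by_contra hcon
  push_neg at hcon
  classical
  letI : MeasurableSpace (PontryaginDual A) := borel _
  haveI : BorelSpace (PontryaginDual A) := ⟨rfl⟩
  set μ : Measure (PontryaginDual A) := Measure.haar with hμ
  set L : C(PontryaginDual A, ℂ) → ℂ := fun f => ∫ x, f x * conj (α x : ℂ) ∂μ with hL
  have hint : ∀ f : C(PontryaginDual A, ℂ),
      Integrable (fun x => f x * conj (α x : ℂ)) μ := by
    intro f
    refine Continuous.integrable_of_hasCompactSupport ?_ ?_
    · exact f.continuous.mul (Complex.continuous_conj.comp
        (continuous_subtype_val.comp α.continuous))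
    · exact IsClosed.isCompact (isClosed_tsupport _)
  -- L vanishes on the range of evC
  have hL0 : ∀ a : A, L (evC a) = 0 := by
    intro a
    have hne : ev a * α⁻¹ ≠ 1 := by
      intro h
      obtain ⟨φ, hφ⟩ := hcon a
      have h2 : φ a * (α φ)⁻¹ = 1 := DFunLike.congr_fun h φ
      exact hφ (eq_of_mul_inv_eq_one h2).symm
    have h0 := integral_char_eq_zero (μ := μ) (ev a * α⁻¹) hne
    have heq : ∀ x : PontryaginDual A,
        (((ev a * α⁻¹) x : Circle) : ℂ) = (x a : ℂ) * conj (α x : ℂ) := by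
      intro x
      have : (ev a * α⁻¹) x = x a * (α x)⁻¹ := rfl
      rw [this, Circle.coe_mul, Circle.coe_inv_eq_conj]
    rw [hL]
    simp_rw [evC_apply, ← heq]
    exact h0
  -- members of the star algebra generated by `evC` are in the span of its range
  have hmem : ∀ f ∈ StarAlgebra.adjoin ℂ (Set.range (evC (A := A))),
      f ∈ Submodule.span ℂ (Set.range (evC (A := A))) := by
    intro f hf
    have hstar : Set.range (evC (A := A)) ∪ star (Set.range (evC (A := A)))
        = Set.range (evC (A := A)) := by
      refine Set.union_eq_self_of_subset_right ?_
      rintro g hg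
      rw [Set.mem_star] at hg
      obtain ⟨a, ha⟩ := hg
      refine ⟨a⁻¹, ?_⟩
      have := congrArg star ha
      rw [star_star] at this
      rw [← this]
      ext φ
      simp only [ContinuousMap.star_apply, evC_apply, map_inv]
      rw [Circle.coe_inv_eq_conj]
      rfl
    have h1 : f ∈ Algebra.adjoin ℂ (Set.range (evC (A := A))) := by
      have := StarAlgebra.adjoin_toSubalgebra ℂ (Set.range (evC (A := A)))
      rw [hstar] at this
      rw [← this]
      exact hf
    have h2 : Submonoid.closure (Set.range (evC (A := A))) = MonoidHom.mrange (evC (A := A)) := by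
      rw [← MonoidHom.coe_mrange, Submonoid.closure_eq]
    have h3 := Algebra.adjoin_eq_span ℂ (Set.range (evC (A := A)))
    rw [h2] at h3
    have h4 : f ∈ Subalgebra.toSubmodule (Algebra.adjoin ℂ (Set.range (evC (A := A)))) := h1
    rw [h3] at h4
    rwa [MonoidHom.coe_mrange] at h4
  -- L vanishes on the span
  have hspan : ∀ f ∈ Submodule.span ℂ (Set.range (evC (A := A))), L f = 0 := by
    intro f hf
    induction hf using Submodule.span_induction with
    | mem x hx => obtain ⟨a, rfl⟩ := hx; exact hL0 a
    | zero => simp [hL]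
    | add x y hx hy ihx ihy =>
        have : L (x + y) = L x + L y := by
          rw [hL]
          simp only [ContinuousMap.add_apply, add_mul]
          exact integral_add (hint x) (hint y)
        rw [this, ihx, ihy, add_zero]
    | smul c x hx ih =>
        have : L (c • x) = c * L x := by
          rw [hL]
          simp only [ContinuousMap.smul_apply, smul_eq_mul, mul_assoc]
          exact integral_const_mul c _
        rw [this, ih, mul_zero]
  -- the star algebra separates points, hence is dense
  have hsep : (StarAlgebra.adjoin ℂ (Set.range (evC (A := A)))).SeparatesPoints := by
    intro φ ψ hφψ
    obtain ⟨a, ha⟩ := DFunLike.ne_iff.mp hφψ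
    refine ⟨⇑(evC a), ⟨evC a, StarAlgebra.subset_adjoin ℂ _ ⟨a, rfl⟩, rfl⟩, ?_⟩
    simpa using fun h => ha (Circle.coe_injective h)
  have hSW := ContinuousMap.starSubalgebra_topologicalClosure_eq_top_of_separatesPoints
    (StarAlgebra.adjoin ℂ (Set.range (evC (A := A)))) hsep
  -- the function F = α as an element of C(K, ℂ)
  set F : C(PontryaginDual A, ℂ) :=
    ⟨fun φ => (α φ : ℂ), continuous_subtype_val.comp α.continuous⟩ with hF
  have hLF : L F = ((μ Set.univ).toReal : ℂ) := by
    rw [hL]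
    have : ∀ x : PontryaginDual A, F x * conj (α x : ℂ) = 1 := by
      intro x
      rw [hF]
      show (α x : ℂ) * conj (α x : ℂ) = 1
      rw [← Circle.coe_inv_eq_conj, ← Circle.coe_mul, mul_inv_cancel, Circle.coe_one]
    simp_rw [this]
    simp [Measure.real]
  have hμuniv : (μ Set.univ).toReal ≠ 0 := by
    refine ENNReal.toReal_ne_zero.mpr ⟨?_, ?_⟩
    · exact IsOpen.measure_ne_zero μ isOpen_univ Set.univ_nonempty
    · exact measure_ne_top μ _
  -- F is in the closure of the star algebra
  have hFcl : F ∈ closure ((StarAlgebra.adjoin ℂ (Set.range (evC (A := A)))) :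
      Set C(PontryaginDual A, ℂ)) := by
    have hmem' : F ∈ (StarAlgebra.adjoin ℂ (Set.range (evC (A := A)))).topologicalClosure := by
      rw [hSW]; trivial
    exact hmem'
  -- conclude L F = 0
  have hLF0 : L F = 0 := by
    rw [← norm_eq_zero]
    have key : ∀ ε : ℝ, 0 < ε → ‖L F‖ ≤ 0 + ε := by
      intro ε hε
      set c := (μ Set.univ).toReal with hc
      have hc0 : 0 ≤ c := ENNReal.toReal_nonneg
      obtain ⟨f, hfS, hdist⟩ := Metric.mem_closure_iff.mp hFcl (ε / (c + 1))
        (by positivity)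
      have hLf : L f = 0 := hspan f (hmem f hfS)
      have hsub : L F - L f = ∫ x, (F x - f x) * conj (α x : ℂ) ∂μ := by
        rw [hL]
        simp only [sub_mul]
        rw [integral_sub (hint F) (hint f)]
      have hbound : ‖∫ x, (F x - f x) * conj (α x : ℂ) ∂μ‖ ≤ (dist F f) * c := by
        refine norm_integral_le_of_norm_le_const (Filter.Eventually.of_forall fun x => ?_)
        rw [norm_mul, RCLike.norm_conj]
        have h1 : ‖(α x : ℂ)‖ = 1 := by
          rw [Circle.norm_coe]
        rw [h1, mul_one]
        calc ‖F x - f x‖ = ‖(F - f) x‖ := by rw [ContinuousMap.sub_apply]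
          _ ≤ ‖F - f‖ := ContinuousMap.norm_coe_le_norm _ _
          _ = dist F f := (dist_eq_norm _ _).symm
      have : ‖L F‖ ≤ (dist F f) * c := by
        calc ‖L F‖ = ‖L F - L f‖ := by rw [hLf, sub_zero]
          _ = ‖∫ x, (F x - f x) * conj (α x : ℂ) ∂μ‖ := by rw [hsub]
          _ ≤ (dist F f) * c := hbound
      have hfin : (dist F f) * c ≤ ε := by
        have h1 : dist F f ≤ ε / (c + 1) := le_of_lt hdist
        have h2 : (dist F f) * c ≤ (ε / (c + 1)) * c :=
          mul_le_mul_of_nonneg_right h1 hc0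
        refine h2.trans ?_
        rw [div_mul_eq_mul_div, div_le_iff₀ (by positivity)]
        nlinarith
      linarith
    linarith [le_of_forall_pos_le_add key, norm_nonneg (L F)]
  rw [hLF] at hLF0
  exact hμuniv (by exact_mod_cast hLF0)

end Surj

end Stmt12Aux


/-- A subgroup `σ` of the dual of an abelian topological group `G` (realized by a discrete
abelian group `A` embedded via `e`) coincides with the set of characters of `G` obtained by
pulling back characters of the compactification `σ* = PontryaginDual A` along the
evaluation map `c_σ`. -/
theorem stmt_12 {G A : Type*} [CommGroup G] [TopologicalSpace G] [IsTopologicalGroup G]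
    [CommGroup A] [TopologicalSpace A] [DiscreteTopology A] [IsTopologicalGroup A]
    (e : A →* PontryaginDual G) (he : Function.Injective e)
    (c : ContinuousMonoidHom G (PontryaginDual A)) (hc : ∀ (t : G) (a : A), c t a = e a t) :
    ∀ χ : PontryaginDual G,
      (∃ a : A, e a = χ) ↔ ∃ α : PontryaginDual (PontryaginDual A), χ = α.comp c := by
  intro χ
  constructor
  · rintro ⟨a, rfl⟩
    refine ⟨Stmt12Aux.ev a, ?_⟩
    refine ContinuousMonoidHom.ext fun t => ?_
    show e a t = Stmt12Aux.ev a (c t)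
    rw [Stmt12Aux.ev_apply, hc]
  · rintro ⟨α, rfl⟩
    obtain ⟨a, ha⟩ := Stmt12Aux.exists_eval α
    refine ⟨a, ContinuousMonoidHom.ext fun t => ?_⟩
    show e a t = α (c t)
    rw [ha (c t), hc]
end

section
/- Let G be an abelian topological group and (K,φ) a minimal topological dynamical system with discrete spectrum, so that H = E_u(K,φ) is a compact abelian group acting transitively and effectively on K. Then for every z ∈ K the orbit map H → K, ϑ ↦ ϑ(z), is a homeomorphism (i.e., the transitive effective action of the compact abelian group H on K is free, and (K,φ) is isomorphic as a G-system to the rotation system on H induced by the compactification map t ↦ φ_t). -/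
/-- For a minimal system with discrete spectrum over an abelian group, where the enveloping
group `H` is a compact abelian group acting transitively and effectively on `K` (with the
`G`-action given through `ι : G →* H` with dense range), every orbit map `h ↦ h • z` is a
homeomorphism; in particular the action is free, and `(K,φ)` is isomorphic as a `G`-system
to the rotation on `H`. -/
theorem stmt_13 {G H K : Type*} [Group G] [TopologicalSpace G] [IsTopologicalGroup G]
    [CommGroup H] [TopologicalSpace H] [IsTopologicalGroup H] [CompactSpace H] [T2Space H]
    [TopologicalSpace K] [CompactSpace K] [T2Space K]
    [MulAction H K] [ContinuousSMul H K]
    (ι : G →* H) (hι : Continuous ι) (hdense : DenseRange ι)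
    (hmin : ∀ x : K, Dense (Set.range fun t : G => ι t • x))
    (htrans : ∀ x y : K, ∃ h : H, h • x = y)
    (heff : ∀ h : H, (∀ x : K, h • x = x) → h = 1) :
    (∀ (h : H) (x : K), h • x = x → h = 1) ∧
    ∀ z : K, IsHomeomorph (fun h : H => h • z) ∧
      ∀ (t : G) (h : H), (ι t * h) • z = ι t • (h • z) := by
  have free : ∀ (h : H) (x : K), h • x = x → h = 1 := by
    intro h x hx
    apply heff
    intro y
    obtain ⟨g, hg⟩ := htrans x y
    rw [← hg, ← mul_smul, mul_comm, mul_smul, hx]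
  refine ⟨free, fun z => ⟨?_, fun t h => mul_smul _ _ _⟩⟩
  rw [isHomeomorph_iff_continuous_bijective]
  refine ⟨continuous_id.smul continuous_const, ?_, fun y => htrans z y⟩
  intro h1 h2 hh
  simp only at hh
  have : (h2⁻¹ * h1) • z = z := by rw [mul_smul, hh, ← mul_smul, inv_mul_cancel, one_smul]
  have := free _ _ this
  rwa [inv_mul_eq_one, eq_comm] at this
end

section
/- Let (K,φ) be a minimal topological dynamical system with discrete spectrum and y ∈ K, and let q : E_u(K,φ) → K, ϑ ↦ ϑ(y), be the orbit map from the uniform enveloping group. Then the following are equivalent: (a) q is injective (equivalently, a homeomorphism and an isomorphism of G-systems onto (K,φ)); (b) whenever (t_i) is a net in G with φ_{t_i}(x) → x for one x ∈ K, then φ_{t_i}(x) → x for every x ∈ K. -/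
/-- For a minimal system with discrete spectrum (the uniform enveloping semigroup `H` is a
compact group), the orbit map `ϑ ↦ ϑ(y)` on `H` is injective (equivalently, an isomorphism
of `G`-systems) if and only if every net in `G` whose action converges to the identity at
one point converges to the identity at every point. Nets in `G` are formalized via filters
on `G`. -/
theorem stmt_18 {G K : Type*} [Group G] [TopologicalSpace G] [IsTopologicalGroup G]
    [TopologicalSpace K] [CompactSpace K] [T2Space K]
    (φ : G → C(K, K))
    (h1 : φ 1 = ContinuousMap.id K)
    (hmul : ∀ s t : G, φ (s * t) = (φ s).comp (φ t))
    (hjoint : Continuous fun p : G × K => φ p.1 p.2)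
    (hmin : ∀ x : K, Dense (Set.range fun t : G => φ t x))
    (H : Set C(K, K)) (hH : H = closure (Set.range φ))
    (hHcompact : IsCompact H)
    (hHgroup : ∀ ϑ ∈ H, ∃ ρ ∈ H,
      ϑ.comp ρ = ContinuousMap.id K ∧ ρ.comp ϑ = ContinuousMap.id K)
    (y : K) :
    Set.InjOn (fun ϑ : C(K, K) => ϑ y) H ↔
      ∀ F : Filter G, F.NeBot →
        (∃ x : K, Filter.Tendsto (fun t : G => φ t x) F (nhds x)) →
        ∀ x : K, Filter.Tendsto (fun t : G => φ t x) F (nhds x) := by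
  have hsub : Set.range φ ⊆ H := hH ▸ subset_closure
  have hid : ContinuousMap.id K ∈ H := h1 ▸ hsub ⟨1, rfl⟩
  have hHclosed : IsClosed H := hH ▸ isClosed_closure
  -- H is closed under composition
  have hcomp1 : ∀ ϑ ∈ H, ∀ t : G, ϑ.comp (φ t) ∈ H := by
    intro ϑ hϑ t
    rw [hH] at hϑ ⊢
    have hmt : Set.MapsTo (fun g : C(K, K) => g.comp (φ t)) (Set.range φ) (Set.range φ) := by
      rintro _ ⟨s, rfl⟩; exact ⟨s * t, hmul s t⟩
    exact map_mem_closure (f := fun g : C(K, K) => g.comp (φ t))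
      (ContinuousMap.continuous_precomp (φ t)) hϑ hmt
  have hcomp : ∀ ϑ ∈ H, ∀ ρ ∈ H, ϑ.comp ρ ∈ H := by
    intro ϑ hϑ ρ hρ
    have : ρ ∈ closure (Set.range φ) := hH ▸ hρ
    have := map_mem_closure (ContinuousMap.continuous_postcomp ϑ) this
      (t := H) (by rintro _ ⟨s, rfl⟩; exact hcomp1 ϑ hϑ s)
    rwa [hHclosed.closure_eq] at this
  -- transitivity of the H-action
  have htrans : ∀ x : K, ∃ ρ ∈ H, ρ y = x := by
    intro x
    have hc : IsCompact ((fun ϑ : C(K, K) => ϑ y) '' H) :=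
      hHcompact.image (continuous_eval_const y)
    have hd : Set.range (fun t : G => φ t y) ⊆ (fun ϑ : C(K, K) => ϑ y) '' H := by
      rintro _ ⟨t, rfl⟩; exact ⟨φ t, hsub ⟨t, rfl⟩, rfl⟩
    have : (Set.univ : Set K) ⊆ (fun ϑ : C(K, K) => ϑ y) '' H := by
      rw [← (hmin y).closure_eq]
      exact (closure_minimal hd hc.isClosed)
    obtain ⟨ρ, hρ, hρy⟩ := this (Set.mem_univ x)
    exact ⟨ρ, hρ, hρy⟩
  constructor
  · -- injectivity → convergence at one point implies convergence everywhere
    intro hinj F hF hex x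
    obtain ⟨x0, hx0⟩ := hex
    have htend : Filter.Tendsto φ F (nhds (ContinuousMap.id K)) := by
      refine hHcompact.tendsto_nhds_of_unique_mapClusterPt
        (Filter.Eventually.of_forall fun t => hsub ⟨t, rfl⟩) ?_
      intro ϑ hϑ hc
      -- ϑ fixes x0
      have hc0 : MapClusterPt (ϑ x0) F (fun t => φ t x0) :=
        hc.continuousAt_comp (continuous_eval_const x0).continuousAt
      have hϑx0 : ϑ x0 = x0 := by
        have h1 : ClusterPt (ϑ x0) (nhds x0) := hc0.clusterPt.mono hx0
        exact eq_of_nhds_neBot h1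
      -- conjugate to a map fixing y
      obtain ⟨ρ, hρH, hρy⟩ := htrans x0
      obtain ⟨ρ', hρ'H, hρρ', hρ'ρ⟩ := hHgroup ρ hρH
      set σ : C(K, K) := ρ'.comp (ϑ.comp ρ) with hσdef
      have hσH : σ ∈ H := hcomp ρ' hρ'H _ (hcomp ϑ hϑ ρ hρH)
      have hσy : σ y = y := by
        have : σ y = ρ' (ϑ (ρ y)) := rfl
        rw [this, hρy, hϑx0, ← hρy]
        exact DFunLike.congr_fun hρ'ρ y
      have hσ : σ = ContinuousMap.id K := hinj hσH hid hσy
      have hρρ'' : ∀ z, ρ (ρ' z) = z := fun z => DFunLike.congr_fun hρρ' z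
      ext w
      have h2 : ρ' (ϑ (ρ (ρ' w))) = ρ' w := DFunLike.congr_fun hσ (ρ' w)
      have h3 : ρ (ρ' (ϑ (ρ (ρ' w)))) = ρ (ρ' w) := congrArg ρ h2
      rw [hρρ'', hρρ''] at h3
      simpa using h3
    have h4 : Filter.Tendsto (fun t : G => φ t x) F (nhds ((ContinuousMap.id K) x)) :=
      ((continuous_eval_const x).tendsto _).comp htend
    simpa using h4
  · -- convergence condition → injectivity
    intro hnet ϑ hϑ ρ hρ heq
    simp only at heq
    obtain ⟨ρ', hρ'H, hρρ', hρ'ρ⟩ := hHgroup ρ hρ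
    set σ : C(K, K) := ρ'.comp ϑ with hσdef
    have hσH : σ ∈ H := hcomp ρ' hρ'H ϑ hϑ
    have hσy : σ y = y := by
      have : σ y = ρ' (ϑ y) := rfl
      rw [this, heq]
      exact DFunLike.congr_fun hρ'ρ y
    have hσcl : σ ∈ closure (Set.range φ) := hH ▸ hσH
    set F : Filter G := Filter.comap φ (nhds σ) with hFdef
    have hFne : F.NeBot := by
      rw [Filter.comap_neBot_iff]
      intro U hU
      obtain ⟨g, hgU, t, rfl⟩ := mem_closure_iff_nhds.mp hσcl U hU
      exact ⟨t, hgU⟩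
    have htendφ : Filter.Tendsto φ F (nhds σ) := Filter.tendsto_comap
    have hev : ∀ x : K, Filter.Tendsto (fun t : G => φ t x) F (nhds (σ x)) := fun x =>
      ((continuous_eval_const x).continuousAt.tendsto.comp htendφ)
    have hall := hnet F hFne ⟨y, by have h5 := hev y; rwa [hσy] at h5⟩
    have hσid : ∀ x : K, σ x = x := fun x => tendsto_nhds_unique (hev x) (hall x)
    have hρρ'' : ∀ z, ρ (ρ' z) = z := fun z => DFunLike.congr_fun hρρ' z
    ext w
    have : ρ' (ϑ w) = w := hσid w
    have h3 : ρ (ρ' (ϑ w)) = ρ w := congrArg ρ this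
    rwa [hρρ''] at h3
end
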